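/- In the limit μ → 0 with μ·N_a → ε fixed (high-temperature limit), the Einstein-lattice fraction (e^{-μN_a}/2)[(N_a²+3N_a+2)(1-e^{-μ})² + (2N_a+3)e^{-μ}(1-e^{-μ}) + 2e^{-2μ}] converges to e^{-ε}(ε²/2 + ε + 1), the classical 3D result. -/

import Mathlib

open Real Filter

/-- High-temperature limit: if `μ_n → 0` (with `μ_n > 0`) and
`N_a(n) = ⌈ε/μ_n - 3/2⌉`, so that `μ_n N_a(n) → ε > 0`, then the
Einstein-lattice fraction converges to the classical 3D result
`e^{-ε}(ε²/2 + ε + 1)`. -/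
theorem stmt_15 (ε : ℝ) (hε : 0 < ε) (μ : ℕ → ℝ) (hμpos : ∀ n, 0 < μ n)
    (hμ0 : Filter.Tendsto μ Filter.atTop (nhds 0))
    (Na : ℕ → ℕ) (hNa : ∀ n, (Na n : ℤ) = ⌈ε / μ n - 3 / 2⌉) :
    Filter.Tendsto
      (fun n : ℕ =>
        Real.exp (-(μ n) * (Na n : ℝ)) / 2 *
          (((Na n : ℝ) ^ 2 + 3 * (Na n : ℝ) + 2) * (1 - Real.exp (-(μ n))) ^ 2 +
            (2 * (Na n : ℝ) + 3) * Real.exp (-(μ n)) * (1 - Real.exp (-(μ n))) +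
            2 * Real.exp (-2 * μ n)))
      Filter.atTop (nhds (Real.exp (-ε) * (ε ^ 2 / 2 + ε + 1))) := by
  have hμne : ∀ n, μ n ≠ 0 := fun n => (hμpos n).ne'
  set a : ℕ → ℝ := fun n => μ n * (Na n : ℝ) with ha_def
  set e : ℕ → ℝ := fun n => Real.exp (-(μ n)) with he_def
  set b : ℕ → ℝ := fun n => (Na n : ℝ) * (1 - e n) with hb_def
  have hμneg : Tendsto (fun n => -(μ n)) atTop (nhds 0) := by
    simpa using hμ0.neg
  -- bounds on N_a
  have hceil : ∀ n, ε / μ n - 3 / 2 ≤ (Na n : ℝ) ∧ (Na n : ℝ) < ε / μ n - 3 / 2 + 1 := by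
    intro n
    constructor
    · have h := Int.le_ceil (ε / μ n - 3 / 2)
      rw [← hNa n] at h
      exact_mod_cast h
    · have h := Int.ceil_lt_add_one (ε / μ n - 3 / 2)
      rw [← hNa n] at h
      exact_mod_cast h
  -- a n → ε by squeeze
  have hlow : ∀ n, ε - 3 / 2 * μ n ≤ a n := by
    intro n
    have h := mul_le_mul_of_nonneg_left (hceil n).1 (hμpos n).le
    calc ε - 3 / 2 * μ n = μ n * (ε / μ n - 3 / 2) := by
          field_simp [hμne n]
      _ ≤ a n := h
  have hhigh : ∀ n, a n ≤ ε := by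
    intro n
    have h := mul_le_mul_of_nonneg_left (hceil n).2.le (hμpos n).le
    calc a n ≤ μ n * (ε / μ n - 3 / 2 + 1) := h
      _ = ε - μ n / 2 := by field_simp [hμne n]; ring
      _ ≤ ε := by linarith [(hμpos n).le]
  have ha : Tendsto a atTop (nhds ε) := by
    have hl : Tendsto (fun n => ε - 3 / 2 * μ n) atTop (nhds ε) := by
      have h := (tendsto_const_nhds :
        Tendsto (fun _ : ℕ => ε) atTop (nhds ε)).sub (hμ0.const_mul (3 / 2 : ℝ))
      simpa using h
    exact tendsto_of_tendsto_of_tendsto_of_le_of_le hl tendsto_const_nhds hlow hhigh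
  -- e n → 1
  have he : Tendsto e atTop (nhds 1) := by
    have := (Real.continuous_exp.tendsto 0).comp hμneg
    simpa [he_def, Function.comp_def] using this
  -- slope: (1 - exp(-μ))/μ → 1
  have hslope : Tendsto (fun n => (1 - e n) / μ n) atTop (nhds 1) := by
    have hd : Tendsto (slope Real.exp 0) (nhdsWithin 0 {(0 : ℝ)}ᶜ) (nhds 1) := by
      have := hasDerivAt_iff_tendsto_slope.mp (Real.hasDerivAt_exp 0)
      simpa using this
    have hcomp : Tendsto (fun n => -(μ n)) atTop (nhdsWithin 0 {(0 : ℝ)}ᶜ) := by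
      refine tendsto_nhdsWithin_of_tendsto_nhds_of_eventually_within _ hμneg ?_
      exact Filter.Eventually.of_forall fun n => by
        simp [neg_ne_zero, hμne n]
    have h := hd.comp hcomp
    refine h.congr fun n => ?_
    simp only [Function.comp, slope_def_field, he_def]
    rw [Real.exp_zero, sub_zero, div_neg, ← neg_div, neg_sub]
  -- b n → ε
  have hb : Tendsto b atTop (nhds ε) := by
    have h := ha.mul hslope
    rw [mul_one] at h
    refine h.congr fun n => ?_
    simp only [hb_def, ha_def]
    field_simp [hμne n]
  -- combine
  have hG : Tendsto (fun n =>
      Real.exp (-(a n)) / 2 *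
        (b n ^ 2 + 3 * b n * (1 - e n) + 2 * (1 - e n) ^ 2 +
          (2 * b n + 3 * (1 - e n)) * e n + 2 * e n ^ 2))
      atTop (nhds (Real.exp (-ε) * (ε ^ 2 / 2 + ε + 1))) := by
    have hexp : Tendsto (fun n => Real.exp (-(a n))) atTop (nhds (Real.exp (-ε))) :=
      (Real.continuous_exp.tendsto _).comp ha.neg
    have hone : Tendsto (fun n => (1 : ℝ) - e n) atTop (nhds 0) := by
      have h := (tendsto_const_nhds :
        Tendsto (fun _ : ℕ => (1:ℝ)) atTop (nhds 1)).sub he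
      simpa using h
    have hsum := ((((hb.pow 2).add ((hb.const_mul 3).mul hone)).add
        ((hone.pow 2).const_mul 2)).add
        (((hb.const_mul 2).add (hone.const_mul 3)).mul he)).add
        ((he.pow 2).const_mul 2)
    have hall := (hexp.div_const 2).mul hsum
    convert hall using 2
    ring
  refine hG.congr fun n => ?_
  have h2 : Real.exp (-(2 * μ n)) = Real.exp (-(μ n)) ^ 2 := by
    rw [show (-(2 * μ n)) = (-(μ n)) + (-(μ n)) by ring, Real.exp_add, sq]
  simp only [ha_def, hb_def, he_def, neg_mul]
  rw [h2]
  ring
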